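/- Consider a complex of Hilbert spaces 0 → H⁰ →^{d₀} H¹ →^{d₁} H² → 0 with d₁ ∘ d₀ = 0, where d₀ and d₁ are bounded Fredholm operators. Then the cohomology groups H^i (i = 0,1,2) are finite-dimensional, the operator d₀* + d₁ : H¹ → H⁰ ⊕ H² is Fredholm, and its index equals −h⁰ + h¹ − h², where h^i = dim H^i. -/

import Mathlib

open ContinuousLinearMap Submodule

section Aux

variable {E F : Type*} [NormedAddCommGroup E] [InnerProductSpace ℂ E] [CompleteSpace E]
  [NormedAddCommGroup F] [InnerProductSpace ℂ F] [CompleteSpace F]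

lemma myker_adjoint (T : E →L[ℂ] F) :
    LinearMap.ker (ContinuousLinearMap.adjoint T : F →ₗ[ℂ] E) = (LinearMap.range (T : E →ₗ[ℂ] F))ᗮ := by
  ext y
  simp only [LinearMap.mem_ker, Submodule.mem_orthogonal, ContinuousLinearMap.coe_coe]
  constructor
  · rintro h _ ⟨x, rfl⟩
    rw [ContinuousLinearMap.coe_coe, ← ContinuousLinearMap.adjoint_inner_right, h, inner_zero_right]
  · intro h
    apply ext_inner_left ℂ
    intro v
    rw [ContinuousLinearMap.adjoint_inner_right, inner_zero_right]
    exact h _ ⟨v, rfl⟩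

lemma myadj_mem_orth (T : E →L[ℂ] F) (y : F) :
    ContinuousLinearMap.adjoint T y ∈ (LinearMap.ker (T : E →ₗ[ℂ] F))ᗮ := by
  intro u hu
  rw [ContinuousLinearMap.adjoint_inner_right, show T u = 0 from LinearMap.mem_ker.mp hu, inner_zero_left]

lemma myadj_surj (T : E →L[ℂ] F)
    (hcl : IsClosed ((LinearMap.range (T : E →ₗ[ℂ] F) : Submodule ℂ F) : Set F))
    (hk : FiniteDimensional ℂ (LinearMap.ker (T : E →ₗ[ℂ] F)))
    (w : E) (hw : w ∈ (LinearMap.ker (T : E →ₗ[ℂ] F))ᗮ) :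
    ∃ y, y ∈ LinearMap.range (T : E →ₗ[ℂ] F) ∧ ContinuousLinearMap.adjoint T y = w := by
  set K := LinearMap.ker (T : E →ₗ[ℂ] F) with hKdef
  set R := LinearMap.range (T : E →ₗ[ℂ] F) with hRdef
  haveI : CompleteSpace R := hcl.completeSpace_coe
  haveI : FiniteDimensional ℂ K := hk
  have hmem : ∀ x : (Kᗮ : Submodule ℂ E), (T.comp Kᗮ.subtypeL) x ∈ R := fun x => ⟨x, rfl⟩
  let A : (Kᗮ : Submodule ℂ E) →L[ℂ] R := (T.comp Kᗮ.subtypeL).codRestrict R hmem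
  have hA : ∀ z, (A z : F) = T (z : E) := fun z => rfl
  have hinj : LinearMap.ker (A : (Kᗮ : Submodule ℂ E) →ₗ[ℂ] R) = ⊥ := by
    rw [Submodule.eq_bot_iff]
    intro z hz
    have h1 : (z : E) ∈ K := by
      rw [LinearMap.mem_ker] at hz ⊢
      have := congrArg (Subtype.val) hz
      rw [ContinuousLinearMap.coe_coe, hA] at this
      exact this
    have := (Submodule.orthogonal_disjoint K).le_bot ⟨h1, z.2⟩
    exact Subtype.ext this
  have hsurj : LinearMap.range (A : (Kᗮ : Submodule ℂ E) →ₗ[ℂ] R) = ⊤ := by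
    rw [Submodule.eq_top_iff']
    rintro ⟨r, x, hx⟩
    set k : E := (orthogonalProjection K x : E)
    have hp : x - k ∈ Kᗮ := sub_starProjection_mem_orthogonal x
    refine ⟨⟨x - k, hp⟩, ?_⟩
    apply Subtype.ext
    rw [ContinuousLinearMap.coe_coe, hA]
    have hk0 : T k = 0 := (orthogonalProjection K x).2
    simp [map_sub, hk0, ← hx]
  let e := ContinuousLinearEquiv.ofBijective A hinj hsurj
  let B : R →L[ℂ] (Kᗮ : Submodule ℂ E) := (e.symm : R →L[ℂ] _)
  let φ : R →L[ℂ] ℂ := (innerSL ℂ w).comp (Kᗮ.subtypeL.comp B)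
  let y0 : R := (InnerProductSpace.toDual ℂ R).symm φ
  have hy0 : ∀ v : R, (inner ℂ y0 v : ℂ) = φ v := fun v =>
    InnerProductSpace.toDual_symm_apply
  refine ⟨(y0 : F), y0.2, ?_⟩
  apply ext_inner_right ℂ
  intro x
  rw [ContinuousLinearMap.adjoint_inner_left]
  set k : E := (orthogonalProjection K x : E)
  have hp : x - k ∈ Kᗮ := sub_starProjection_mem_orthogonal x
  have hTx : T x = T (x - k) := by
    have hk0 : T k = 0 := (orthogonalProjection K x).2
    simp [map_sub, hk0]
  have step1 : (inner ℂ (y0 : F) (T x) : ℂ) = inner ℂ y0 (A ⟨x - k, hp⟩) := by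
    rw [hTx]; rfl
  rw [step1, hy0]
  have step2 : φ (A ⟨x - k, hp⟩) = inner ℂ w (x - k) := by
    show (inner ℂ w ((B (A ⟨x - k, hp⟩) : E)) : ℂ) = inner ℂ w (x - k)
    have : B (A ⟨x - k, hp⟩) = ⟨x - k, hp⟩ := e.symm_apply_apply _
    rw [this]
  rw [step2]
  have hwk : (inner ℂ w k : ℂ) = 0 :=
    Submodule.mem_orthogonal' K w |>.mp hw k (orthogonalProjection K x).2.out
  rw [inner_sub_right, hwk, sub_zero]

noncomputable def quotProdEquiv {R M N : Type*} [Ring R] [AddCommGroup M] [Module R M]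
    [AddCommGroup N] [Module R N] (p : Submodule R M) (q : Submodule R N) :
    ((M × N) ⧸ p.prod q) ≃ₗ[R] (M ⧸ p) × (N ⧸ q) := by
  have hker : LinearMap.ker ((p.mkQ).prodMap (q.mkQ)) = p.prod q := by
    ext ⟨x, y⟩
    simp [LinearMap.mem_ker, Prod.ext_iff, Submodule.mem_prod,
      Submodule.Quotient.mk_eq_zero, LinearMap.prodMap_apply]
  exact (Submodule.quotEquivOfEq _ _ hker.symm).trans
    (LinearMap.quotKerEquivOfSurjective _
      (Prod.map_surjective.mpr ⟨p.mkQ_surjective, q.mkQ_surjective⟩))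

end Aux

/-- A bounded operator between normed spaces is Fredholm if it has
finite-dimensional kernel, closed range, and finite-dimensional cokernel. -/
def IsFredholmOp {X Y : Type*} [NormedAddCommGroup X] [NormedSpace ℂ X]
    [NormedAddCommGroup Y] [NormedSpace ℂ Y] (T : X →L[ℂ] Y) : Prop :=
  FiniteDimensional ℂ (LinearMap.ker (T : X →ₗ[ℂ] Y)) ∧
  IsClosed ((LinearMap.range (T : X →ₗ[ℂ] Y) : Submodule ℂ Y) : Set Y) ∧
  FiniteDimensional ℂ (Y ⧸ LinearMap.range (T : X →ₗ[ℂ] Y))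

theorem stmt17 {H0 H1 H2 : Type*}
    [NormedAddCommGroup H0] [InnerProductSpace ℂ H0] [CompleteSpace H0]
    [NormedAddCommGroup H1] [InnerProductSpace ℂ H1] [CompleteSpace H1]
    [NormedAddCommGroup H2] [InnerProductSpace ℂ H2] [CompleteSpace H2]
    (d0 : H0 →L[ℂ] H1) (d1 : H1 →L[ℂ] H2)
    (hcx : d1.comp d0 = 0)
    (hd0 : IsFredholmOp d0) (hd1 : IsFredholmOp d1)
    (D : H1 →L[ℂ] H0 × H2)
    (hD : D = (ContinuousLinearMap.adjoint d0).prod d1) :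
    FiniteDimensional ℂ (LinearMap.ker (d0 : H0 →ₗ[ℂ] H1)) ∧
    FiniteDimensional ℂ
      (↥(LinearMap.ker (d1 : H1 →ₗ[ℂ] H2)) ⧸
        Submodule.comap (LinearMap.ker (d1 : H1 →ₗ[ℂ] H2)).subtype
          (LinearMap.range (d0 : H0 →ₗ[ℂ] H1))) ∧
    FiniteDimensional ℂ (H2 ⧸ LinearMap.range (d1 : H1 →ₗ[ℂ] H2)) ∧
    IsFredholmOp D ∧
    (Module.finrank ℂ (LinearMap.ker (D : H1 →ₗ[ℂ] H0 × H2)) : ℤ)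
        - (Module.finrank ℂ ((H0 × H2) ⧸ LinearMap.range (D : H1 →ₗ[ℂ] H0 × H2)) : ℤ)
      = -(Module.finrank ℂ (LinearMap.ker (d0 : H0 →ₗ[ℂ] H1)) : ℤ)
        + (Module.finrank ℂ
            (↥(LinearMap.ker (d1 : H1 →ₗ[ℂ] H2)) ⧸
              Submodule.comap (LinearMap.ker (d1 : H1 →ₗ[ℂ] H2)).subtype
                (LinearMap.range (d0 : H0 →ₗ[ℂ] H1))) : ℤ)
        - (Module.finrank ℂ (H2 ⧸ LinearMap.range (d1 : H1 →ₗ[ℂ] H2)) : ℤ) := by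
  obtain ⟨hk0, hc0, hq0⟩ := hd0
  obtain ⟨hk1, hc1, hq1⟩ := hd1
  set K0 := LinearMap.ker (d0 : H0 →ₗ[ℂ] H1) with hK0def
  set R0 := LinearMap.range (d0 : H0 →ₗ[ℂ] H1) with hR0def
  set N1 := LinearMap.ker (d1 : H1 →ₗ[ℂ] H2) with hN1def
  set R1 := LinearMap.range (d1 : H1 →ₗ[ℂ] H2) with hR1def
  haveI : FiniteDimensional ℂ K0 := hk0
  haveI : FiniteDimensional ℂ (H1 ⧸ R0) := hq0
  haveI : FiniteDimensional ℂ (H2 ⧸ R1) := hq1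
  -- basic facts
  have hker0 : LinearMap.ker (d0 : H0 →ₗ[ℂ] H1) = K0 := rfl
  have hrange0 : LinearMap.range (d0 : H0 →ₗ[ℂ] H1) = R0 := rfl
  have hker1 : LinearMap.ker (d1 : H1 →ₗ[ℂ] H2) = N1 := rfl
  have hrange1 : LinearMap.range (d1 : H1 →ₗ[ℂ] H2) = R1 := rfl
  have hcx' : ∀ x, d1 (d0 x) = 0 := by
    intro x
    have := congrFun (congrArg DFunLike.coe hcx) x
    simpa using this
  have hR0N1 : R0 ≤ N1 := by
    rintro _ ⟨x, rfl⟩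
    exact hcx' x
  haveI : CompleteSpace N1 := (ContinuousLinearMap.isClosed_ker d1).completeSpace_coe
  -- H¹ cohomology is finite dimensional
  set Q := Submodule.comap N1.subtype R0 with hQdef
  let f : N1 →ₗ[ℂ] H1 ⧸ R0 := R0.mkQ.comp N1.subtype
  have hkerf : LinearMap.ker f = Q := by
    rw [hQdef]
    show LinearMap.ker (R0.mkQ.comp N1.subtype) = _
    rw [LinearMap.ker_comp, Submodule.ker_mkQ]
  let eH1 : (N1 ⧸ Q) ≃ₗ[ℂ] LinearMap.range f :=
    (Submodule.quotEquivOfEq _ _ hkerf.symm).trans f.quotKerEquivRange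
  haveI hH1fin : FiniteDimensional ℂ (N1 ⧸ Q) := eH1.symm.finiteDimensional
  -- kernel of D
  subst hD
  have hkerD : LinearMap.ker (((ContinuousLinearMap.adjoint d0).prod d1 : H1 →L[ℂ] H0 × H2) :
      H1 →ₗ[ℂ] H0 × H2) = R0ᗮ ⊓ N1 := by
    rw [ContinuousLinearMap.coe_prod, LinearMap.ker_prod]
    congr 1
    exact myker_adjoint d0
  -- Q is closed in N1
  have hQclosed : IsClosed (Q : Set N1) := hc0.preimage continuous_subtype_val
  haveI : CompleteSpace Q := hQclosed.completeSpace_coe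
  have hcompl : IsCompl Q Qᗮ := Submodule.isCompl_orthogonal_of_hasOrthogonalProjection
  let e1 : (N1 ⧸ Q) ≃ₗ[ℂ] Qᗮ := Submodule.quotientEquivOfIsCompl _ _ hcompl
  let e2 : (Qᗮ : Submodule ℂ N1) ≃ₗ[ℂ] Submodule.map N1.subtype Qᗮ :=
    Submodule.equivMapOfInjective _ N1.injective_subtype _
  have hmap : Submodule.map N1.subtype Qᗮ = R0ᗮ ⊓ N1 := by
    ext x
    constructor
    · rintro ⟨z, hz, rfl⟩
      refine ⟨?_, z.2⟩
      intro u hu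
      have hu' : u ∈ N1 := hR0N1 hu
      have := hz ⟨u, hu'⟩ hu
      simpa [Submodule.coe_inner] using this
    · rintro ⟨hx1, hx2⟩
      refine ⟨⟨x, hx2⟩, ?_, rfl⟩
      intro u hu
      have : (u : H1) ∈ R0 := hu
      simpa [Submodule.coe_inner] using hx1 (u : H1) this
  let eker : LinearMap.ker (((ContinuousLinearMap.adjoint d0).prod d1 : H1 →L[ℂ] H0 × H2) :
      H1 →ₗ[ℂ] H0 × H2) ≃ₗ[ℂ] (N1 ⧸ Q) :=
    ((e1.trans (e2.trans (LinearEquiv.ofEq _ _ (hmap.trans hkerD.symm))))).symm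
  haveI hkerDfin : FiniteDimensional ℂ
      (LinearMap.ker (((ContinuousLinearMap.adjoint d0).prod d1 : H1 →L[ℂ] H0 × H2) :
        H1 →ₗ[ℂ] H0 × H2)) := eker.symm.finiteDimensional
  have hfr1 : Module.finrank ℂ
      (LinearMap.ker (((ContinuousLinearMap.adjoint d0).prod d1 : H1 →L[ℂ] H0 × H2) :
        H1 →ₗ[ℂ] H0 × H2)) = Module.finrank ℂ (N1 ⧸ Q) := eker.finrank_eq
  -- range of D
  have hrangeD : LinearMap.range (((ContinuousLinearMap.adjoint d0).prod d1 : H1 →L[ℂ] H0 × H2) :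
      H1 →ₗ[ℂ] H0 × H2) = (K0ᗮ).prod R1 := by
    apply le_antisymm
    · rintro _ ⟨x, rfl⟩
      exact ⟨myadj_mem_orth d0 x, ⟨x, rfl⟩⟩
    · rintro ⟨a, b⟩ ⟨ha, hb⟩
      obtain ⟨y, hyR, hy⟩ := myadj_surj d0 hc0 hk0 a ha
      obtain ⟨z, rfl⟩ := hb
      set n : H1 := (orthogonalProjection N1 z : H1)
      have hpN : z - n ∈ N1ᗮ := sub_starProjection_mem_orthogonal z
      have hd1p : d1 (z - n) = d1 z := by
        have : d1 n = 0 := (orthogonalProjection N1 z).2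
        simp [map_sub, this]
      have hadp : ContinuousLinearMap.adjoint d0 (z - n) = 0 := by
        have hle : N1ᗮ ≤ R0ᗮ := Submodule.orthogonal_le hR0N1
        have : z - n ∈ LinearMap.ker (ContinuousLinearMap.adjoint d0 : H1 →ₗ[ℂ] H0) := by
          rw [myker_adjoint d0]
          exact hle hpN
        exact this
      have hd1y : d1 y = 0 := hR0N1 hyR
      refine ⟨y + (z - n), ?_⟩
      have : ContinuousLinearMap.adjoint d0 (y + (z - n)) = a := by
        rw [map_add, hy, hadp, add_zero]
      simp only [ContinuousLinearMap.coe_prod, LinearMap.prod_apply, Pi.prod,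
        ContinuousLinearMap.coe_coe]
      rw [Prod.ext_iff]
      constructor
      · exact this
      · show d1 (y + (z - n)) = d1 z
        rw [map_add, hd1y, zero_add, hd1p]
  have hclosedD : IsClosed ((((K0ᗮ).prod R1 : Submodule ℂ (H0 × H2))) : Set (H0 × H2)) := by
    have : (((K0ᗮ).prod R1 : Submodule ℂ (H0 × H2)) : Set (H0 × H2)) =
        (K0ᗮ : Set H0) ×ˢ (R1 : Set H2) := rfl
    rw [this]
    exact (Submodule.isClosed_orthogonal K0).prod hc1
  -- cokernel of D
  have hcomplK0 : IsCompl K0 K0ᗮ := Submodule.isCompl_orthogonal_of_hasOrthogonalProjection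
  let ecoker : ((H0 × H2) ⧸ LinearMap.range
      (((ContinuousLinearMap.adjoint d0).prod d1 : H1 →L[ℂ] H0 × H2) : H1 →ₗ[ℂ] H0 × H2))
      ≃ₗ[ℂ] K0 × (H2 ⧸ R1) :=
    ((Submodule.quotEquivOfEq _ _ hrangeD).trans (quotProdEquiv _ _)).trans
      ((Submodule.quotientEquivOfIsCompl _ _ hcomplK0.symm).prodCongr (LinearEquiv.refl _ _))
  haveI hcokerfin : FiniteDimensional ℂ ((H0 × H2) ⧸ LinearMap.range
      (((ContinuousLinearMap.adjoint d0).prod d1 : H1 →L[ℂ] H0 × H2) : H1 →ₗ[ℂ] H0 × H2)) :=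
    ecoker.symm.finiteDimensional
  have hfr2 : Module.finrank ℂ ((H0 × H2) ⧸ LinearMap.range
      (((ContinuousLinearMap.adjoint d0).prod d1 : H1 →L[ℂ] H0 × H2) : H1 →ₗ[ℂ] H0 × H2))
      = Module.finrank ℂ K0 + Module.finrank ℂ (H2 ⧸ R1) := by
    rw [ecoker.finrank_eq, Module.finrank_prod]
  refine ⟨hk0, hH1fin, hq1, ⟨hkerDfin, ?_, hcokerfin⟩, ?_⟩
  · rw [hrangeD]; exact hclosedD
  · rw [hfr1, hfr2]
    push_cast
    ring
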